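/- Let A be an order-m dimension-n real tensor (m ≥ 2) such that there exists a permutation matrix P ∈ ℝ^{n×n} for which the tensor P A, defined by (P A)_{i1 i2 … im} = Σ_{i=1}^n p_{i1 i} a_{i i2 … im}, is a Z-tensor, and let b ∈ ℝ^n with P b ≥ 0. Suppose the problem (P0) of minimizing ‖x‖₀ subject to x ≥ 0, A x^{m-1} − b ≥ 0, ⟨x, A x^{m-1} − b⟩ = 0 is feasible. Then (P0) has a solution x* which is also the unique optimal solution of the problem of minimizing e^T x subject to x ≥ 0 and A x^{m-1} − b = 0. -/

import Mathlib

/-- `(A x^{m-1})_i = ∑_{i₂,…,i_m} a_{i i₂ … i_m} x_{i₂} ⋯ x_{i_m}`. -/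
def tApply {n k : ℕ} (A : Fin n → (Fin k → Fin n) → ℝ) (x : Fin n → ℝ) : Fin n → ℝ :=
  fun i => ∑ j : Fin k → Fin n, A i j * ∏ t, x (j t)

/-- `A` is a Z-tensor: all off-diagonal entries (indices not all equal) are nonpositive. -/
def IsZTensor {n k : ℕ} (A : Fin n → (Fin k → Fin n) → ℝ) : Prop :=
  ∀ i j, ¬ (∀ t, j t = i) → A i j ≤ 0

/-- `‖x‖₀`, the number of nonzero components of `x`. -/
noncomputable def l0 {n : ℕ} (x : Fin n → ℝ) : ℕ :=
  (Finset.univ.filter (fun i => x i ≠ 0)).card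

lemma tApply_continuous {n k : ℕ} (A : Fin n → (Fin k → Fin n) → ℝ) (i : Fin n) :
    Continuous fun x : Fin n → ℝ => tApply A x i := by
  unfold tApply
  exact continuous_finset_sum _ fun j _ =>
    continuous_const.mul (continuous_finset_prod _ fun t _ => continuous_apply _)

/-- Monotonicity: decreasing off-"diagonal" coordinates increases `tApply`. -/
lemma tApply_mono {n k : ℕ} (A : Fin n → (Fin k → Fin n) → ℝ) (τ : Fin n → Fin n)
    (hZ : ∀ i j, ¬ (∀ t, j t = τ i) → A i j ≤ 0) (i : Fin n) {x y : Fin n → ℝ}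
    (hx0 : ∀ l, 0 ≤ x l) (hxy : ∀ l, x l ≤ y l) (hd : x (τ i) = y (τ i)) :
    tApply A y i ≤ tApply A x i := by
  unfold tApply
  refine Finset.sum_le_sum fun j _ => ?_
  by_cases h : ∀ t, j t = τ i
  · have hprod : ∏ t, y (j t) = ∏ t, x (j t) :=
      Finset.prod_congr rfl fun t _ => by rw [h t, ← hd]
    rw [hprod]
  · have hA := hZ i j h
    have h2 : ∏ t, x (j t) ≤ ∏ t, y (j t) :=
      Finset.prod_le_prod (fun t _ => hx0 _) (fun t _ => hxy _)
    exact mul_le_mul_of_nonpos_left h2 hA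

lemma tApply_nonpos {n k : ℕ} (hk : k ≠ 0) (A : Fin n → (Fin k → Fin n) → ℝ)
    (τ : Fin n → Fin n) (hZ : ∀ i j, ¬ (∀ t, j t = τ i) → A i j ≤ 0) (i : Fin n)
    {x : Fin n → ℝ} (hx0 : ∀ l, 0 ≤ x l) (h0 : x (τ i) = 0) : tApply A x i ≤ 0 := by
  unfold tApply
  refine Finset.sum_nonpos fun j _ => ?_
  by_cases h : ∀ t, j t = τ i
  · have ht : Nonempty (Fin k) := ⟨⟨0, Nat.pos_of_ne_zero hk⟩⟩
    obtain ⟨t⟩ := ht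
    have : ∏ t, x (j t) = 0 :=
      Finset.prod_eq_zero (Finset.mem_univ t) (by rw [h t, h0])
    simp [this]
  · exact mul_nonpos_of_nonpos_of_nonneg (hZ i j h) (Finset.prod_nonneg fun t _ => hx0 _)

/-- Suppose `P` is a permutation matrix (given by the permutation `σ`) such that the
tensor-matrix product `P A`, with entries `(P A)_{i₁ i₂ … i_m} = ∑ᵢ p_{i₁ i} a_{i i₂ … i_m}`,
is a Z-tensor, and `P b ≥ 0`.  If `(P₀)` is feasible, then it has a solution `xs`
which is also the unique optimal solution of the linear-objective problem `(P₁)`. -/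
theorem stmt13 {n m : ℕ} (hm : 2 ≤ m) (A : Fin n → (Fin (m - 1) → Fin n) → ℝ)
    (b : Fin n → ℝ) (P : Matrix (Fin n) (Fin n) ℝ) (σ : Equiv.Perm (Fin n))
    (hP : ∀ i l, P i l = if l = σ i then 1 else 0)
    (hPA : IsZTensor (fun i j => ∑ l, P i l * A l j))
    (hPb : ∀ i, 0 ≤ ∑ l, P i l * b l)
    (hfeas : ∃ x : Fin n → ℝ, (∀ i, 0 ≤ x i) ∧ (∀ i, b i ≤ tApply A x i) ∧
      ∑ i, x i * (tApply A x i - b i) = 0) :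
    ∃ xs : Fin n → ℝ,
      -- xs solves (P₀)
      ((∀ i, 0 ≤ xs i) ∧ (∀ i, b i ≤ tApply A xs i) ∧
        ∑ i, xs i * (tApply A xs i - b i) = 0) ∧
      (∀ x : Fin n → ℝ, ((∀ i, 0 ≤ x i) ∧ (∀ i, b i ≤ tApply A x i) ∧
        ∑ i, x i * (tApply A x i - b i) = 0) → l0 xs ≤ l0 x) ∧
      -- xs is the unique optimal solution of (P₁)
      ((∀ i, 0 ≤ xs i) ∧ ∀ i, tApply A xs i - b i = 0) ∧
      (∀ y : Fin n → ℝ, ((∀ i, 0 ≤ y i) ∧ ∀ i, tApply A y i - b i = 0) →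
        (∑ i, xs i ≤ ∑ i, y i) ∧ (∑ i, y i = ∑ i, xs i → y = xs)) := by
  rcases Nat.eq_zero_or_pos n with hn | hn
  · subst hn
    refine ⟨fun i => i.elim0, ⟨fun i => i.elim0, fun i => i.elim0, by simp⟩,
      fun x _ => le_refl _, ⟨fun i => i.elim0, fun i => i.elim0⟩,
      fun y _ => ⟨by simp, fun _ => funext fun i => i.elim0⟩⟩
  have hNE : Nonempty (Fin n) := ⟨⟨0, hn⟩⟩
  have hk : m - 1 ≠ 0 := by omega
  set τ : Fin n → Fin n := fun i => σ.symm i with hτ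
  have hτinj : Function.Injective τ := σ.symm.injective
  have hZ : ∀ i j, ¬ (∀ t, j t = τ i) → A i j ≤ 0 := by
    intro i j h
    have := hPA (σ.symm i) j h
    simpa [hP, ite_mul, one_mul, zero_mul, Finset.sum_ite_eq'] using this
  have hb : ∀ i, 0 ≤ b i := by
    intro i
    have := hPb (σ.symm i)
    simpa [hP, ite_mul, one_mul, zero_mul, Finset.sum_ite_eq'] using this
  set F : Set (Fin n → ℝ) := {x | (∀ l, 0 ≤ x l) ∧ ∀ l, b l ≤ tApply A x l} with hF
  obtain ⟨x₀, hx₀0, hx₀f, -⟩ := hfeas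
  have hFne : F.Nonempty := ⟨x₀, hx₀0, hx₀f⟩
  have hbdd : ∀ l : Fin n, BddBelow ((fun x => x l) '' F) := by
    intro l
    exact ⟨0, by rintro t ⟨z, hz, rfl⟩; exact hz.1 l⟩
  set xs : Fin n → ℝ := fun l => sInf ((fun x => x l) '' F) with hxs
  have hxs_le : ∀ x ∈ F, ∀ l, xs l ≤ x l := by
    intro x hx l
    exact csInf_le (hbdd l) ⟨x, hx, rfl⟩
  have hxs0 : ∀ l, 0 ≤ xs l := by
    intro l
    refine le_csInf (hFne.image _) ?_
    rintro t ⟨z, hz, rfl⟩; exact hz.1 l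
  -- approximation of xs by elements of F
  have happrox : ∀ N : ℕ, ∃ y, y ∈ F ∧ ∀ l, xs l ≤ y l ∧ y l ≤ xs l + ((N : ℝ)+1)⁻¹ := by
    intro N
    have hpos : (0:ℝ) < ((N : ℝ)+1)⁻¹ := by positivity
    have hc : ∀ l : Fin n, ∃ x, x ∈ F ∧ x l < xs l + ((N : ℝ)+1)⁻¹ := by
      intro l
      have hlt : sInf ((fun x => x l) '' F) < xs l + ((N : ℝ)+1)⁻¹ :=
        lt_add_of_pos_right _ hpos
      obtain ⟨a, ha, hal⟩ := exists_lt_of_csInf_lt (hFne.image _) hlt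
      obtain ⟨x, hxF, rfl⟩ := ha
      exact ⟨x, hxF, hal⟩
    choose c hcF hcl using hc
    set y : Fin n → ℝ := fun l => Finset.univ.inf' Finset.univ_nonempty (fun i' => c i' l)
      with hy
    have hy0 : ∀ l, 0 ≤ y l := by
      intro l
      exact Finset.le_inf' _ _ fun i' _ => (hcF i').1 l
    have hyle : ∀ i' l, y l ≤ c i' l := fun i' l => Finset.inf'_le _ (Finset.mem_univ i')
    have hyF : y ∈ F := by
      refine ⟨hy0, fun l => ?_⟩
      obtain ⟨i₀, -, hi₀⟩ := Finset.exists_mem_eq_inf' (Finset.univ_nonempty)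
        (fun i' => c i' (τ l))
      have h2 : tApply A (c i₀) l ≤ tApply A y l :=
        tApply_mono A τ hZ l hy0 (fun t => hyle i₀ t) hi₀
      exact le_trans ((hcF i₀).2 l) h2
    refine ⟨y, hyF, fun l => ⟨hxs_le y hyF l, ?_⟩⟩
    exact le_trans (hyle l l) (le_of_lt (hcl l))
  choose Y hY1 hY2 using happrox
  have hYt : Filter.Tendsto Y Filter.atTop (nhds xs) := by
    rw [tendsto_pi_nhds]
    intro l
    have hupper : Filter.Tendsto (fun N : ℕ => xs l + ((N : ℝ)+1)⁻¹) Filter.atTop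
        (nhds (xs l + 0)) := by
      refine Filter.Tendsto.add tendsto_const_nhds ?_
      have := tendsto_one_div_add_atTop_nhds_zero_nat (𝕜 := ℝ)
      simpa [one_div] using this
    rw [add_zero] at hupper
    exact tendsto_of_tendsto_of_tendsto_of_le_of_le tendsto_const_nhds hupper
      (fun N => (hY2 N l).1) (fun N => (hY2 N l).2)
  have hxsF : xs ∈ F := by
    refine ⟨hxs0, fun l => ?_⟩
    have h1 : Filter.Tendsto (fun N => tApply A (Y N) l) Filter.atTop
        (nhds (tApply A xs l)) := ((tApply_continuous A l).tendsto xs).comp hYt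
    exact ge_of_tendsto' h1 fun N => (hY1 N).2 l
  -- xs solves the equation
  have heq : ∀ l, tApply A xs l = b l := by
    intro i
    have hge : b i ≤ tApply A xs i := hxsF.2 i
    by_cases h0 : xs (τ i) = 0
    · exact le_antisymm (le_trans (tApply_nonpos hk A τ hZ i hxs0 h0) (hb i)) hge
    · by_contra hne
      have hgt : b i < tApply A xs i := lt_of_le_of_ne hge (fun h => hne h.symm)
      have hτpos : 0 < xs (τ i) := lt_of_le_of_ne (hxs0 _) (Ne.symm h0)
      set g : ℝ → ℝ := fun δ => tApply A (Function.update xs (τ i) (xs (τ i) - δ)) i with hg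
      have hgc : Continuous g := by
        refine (tApply_continuous A i).comp (continuous_pi fun l => ?_)
        simp only [Function.update_apply]
        by_cases hl : l = τ i
        · simp only [hl, if_true]
          exact continuous_const.sub continuous_id
        · simp only [hl, if_false]
          exact continuous_const
      have hg0 : g 0 = tApply A xs i := by
        simp [hg]
      have hev : g ⁻¹' {t | b i < t} ∈ nhds (0:ℝ) := by
        refine hgc.continuousAt ?_
        rw [hg0]
        exact lt_mem_nhds hgt
      obtain ⟨ε, hε, hball⟩ := Metric.mem_nhds_iff.mp hev
      set δ : ℝ := min (ε/2) (xs (τ i)) with hδ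
      have hδpos : 0 < δ := lt_min (by linarith) hτpos
      have hδball : δ ∈ Metric.ball (0:ℝ) ε := by
        rw [Metric.mem_ball, Real.dist_eq, sub_zero, abs_of_pos hδpos]
        exact lt_of_le_of_lt (min_le_left _ _) (by linarith)
      have hgδ : b i < g δ := hball hδball
      set y : Fin n → ℝ := Function.update xs (τ i) (xs (τ i) - δ) with hy
      have hy0 : ∀ l, 0 ≤ y l := by
        intro l
        rw [hy, Function.update_apply]
        by_cases hl : l = τ i
        · rw [if_pos hl]
          have := min_le_right (ε/2) (xs (τ i))
          linarith [hδ ▸ this]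
        · rw [if_neg hl]; exact hxs0 l
      have hyle : ∀ l, y l ≤ xs l := by
        intro l
        rw [hy, Function.update_apply]
        by_cases hl : l = τ i
        · rw [if_pos hl, hl]; linarith
        · rw [if_neg hl]
      have hyF : y ∈ F := by
        refine ⟨hy0, fun l => ?_⟩
        by_cases hl : l = i
        · subst hl
          exact le_of_lt hgδ
        · have hne' : τ l ≠ τ i := fun h => hl (hτinj h)
          have hyd : y (τ l) = xs (τ l) := by
            rw [hy, Function.update_apply, if_neg hne']
          exact le_trans (hxsF.2 l) (tApply_mono A τ hZ l hy0 hyle hyd)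
      have := hxs_le y hyF (τ i)
      rw [hy, Function.update_self] at this
      linarith
  refine ⟨xs, ⟨hxs0, fun i => le_of_eq (heq i).symm, ?_⟩, ?_, ⟨hxs0, fun i => by
    rw [heq i, sub_self]⟩, ?_⟩
  · exact Finset.sum_eq_zero fun i _ => by rw [heq i, sub_self, mul_zero]
  · rintro x ⟨hx0, hxf, -⟩
    have hxF : x ∈ F := ⟨hx0, hxf⟩
    refine Finset.card_le_card ?_
    intro i hi
    simp only [Finset.mem_filter, Finset.mem_univ, true_and] at hi ⊢
    intro hxi
    apply hi
    have h1 : xs i ≤ x i := hxs_le x hxF i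
    have := hxs0 i
    rw [hxi] at h1
    linarith
  · rintro y ⟨hy0, hyf⟩
    have hyF : y ∈ F := ⟨hy0, fun l => le_of_eq (by linarith [hyf l])⟩
    have hle : ∀ l, xs l ≤ y l := hxs_le y hyF
    refine ⟨Finset.sum_le_sum fun l _ => hle l, fun hsum => ?_⟩
    have := (Finset.sum_eq_sum_iff_of_le (fun l _ => hle l)).mp hsum.symm
    exact funext fun l => ((this l (Finset.mem_univ l))).symm
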